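/- Let A be a unital associative algebra over a commutative ring k, let (Γ₁, ∂₁) and (Γ₂, ∂₂) be first-order differential calculi over A, let Γ₀ be an A-bimodule and δ : A → Γ₀ a k-linear map satisfying the Leibniz rule. Suppose φ : Γ₁ ⊕ Γ₀ → Γ₂ ⊕ Γ₀ is an A-bimodule isomorphism with φ ∘ (∂₁ ⊕ δ) = ∂₂ ⊕ δ and φ({0} ⊕ Γ₀) = {0} ⊕ Γ₀. Then φ induces an A-bimodule isomorphism ψ : Γ₁ → Γ₂ with ψ ∘ ∂₁ = ∂₂; that is, the extended calculi being isomorphic (compatibly with the one-dimensional sector) forces the underlying outer calculi (Γ₁, ∂₁) and (Γ₂, ∂₂) to be isomorphic, so the map Δ^Out_In is injective on isomorphism classes. -/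
import Mathlib


/- Injectivity of Δ^Out_In on isomorphism classes: an isomorphism of the
extended calculi Γ₁ ⊕ Γ₀ ≅ Γ₂ ⊕ Γ₀ compatible with the one-dimensional sector
induces an isomorphism of the underlying outer calculi (Γ₁, ∂₁) ≅ (Γ₂, ∂₂). -/

open MulOpposite

/-- Let `(Γ₁, ∂₁)`, `(Γ₂, ∂₂)` be first-order differential
calculi over `A`, `Γ₀` an `A`-bimodule, `δ : A → Γ₀` a `k`-linear Leibniz map,
and `φ : Γ₁ ⊕ Γ₀ → Γ₂ ⊕ Γ₀` an `A`-bimodule isomorphism with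
`φ ∘ (∂₁ ⊕ δ) = ∂₂ ⊕ δ` and `φ({0} ⊕ Γ₀) = {0} ⊕ Γ₀`.  Then `φ` induces an
`A`-bimodule isomorphism `ψ : Γ₁ → Γ₂` with `ψ ∘ ∂₁ = ∂₂`; the underlying
outer calculi are isomorphic, so `Δ^Out_In` is injective on isomorphism
classes. -/
theorem out_in_injective (k A Γ₁ Γ₂ Γ₀ : Type*)
    [CommRing k] [Ring A] [Algebra k A]
    [AddCommGroup Γ₁] [Module k Γ₁] [Module A Γ₁] [Module Aᵐᵒᵖ Γ₁]
    [IsScalarTower k A Γ₁] [IsScalarTower k Aᵐᵒᵖ Γ₁] [SMulCommClass A Aᵐᵒᵖ Γ₁]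
    [AddCommGroup Γ₂] [Module k Γ₂] [Module A Γ₂] [Module Aᵐᵒᵖ Γ₂]
    [IsScalarTower k A Γ₂] [IsScalarTower k Aᵐᵒᵖ Γ₂] [SMulCommClass A Aᵐᵒᵖ Γ₂]
    [AddCommGroup Γ₀] [Module k Γ₀] [Module A Γ₀] [Module Aᵐᵒᵖ Γ₀]
    [IsScalarTower k A Γ₀] [IsScalarTower k Aᵐᵒᵖ Γ₀] [SMulCommClass A Aᵐᵒᵖ Γ₀]
    (der₁ : A →ₗ[k] Γ₁) (der₂ : A →ₗ[k] Γ₂) (δ : A →ₗ[k] Γ₀)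
    (hder₁ : ∀ a b : A, der₁ (a * b) = op b • der₁ a + a • der₁ b)
    (hGen₁ : ∀ x : Γ₁, ∃ (n : ℕ) (aa bb : Fin n → A), x = ∑ i, aa i • der₁ (bb i))
    (hder₂ : ∀ a b : A, der₂ (a * b) = op b • der₂ a + a • der₂ b)
    (hGen₂ : ∀ x : Γ₂, ∃ (n : ℕ) (aa bb : Fin n → A), x = ∑ i, aa i • der₂ (bb i))
    (hδ : ∀ a b : A, δ (a * b) = op b • δ a + a • δ b)
    (φ : (Γ₁ × Γ₀) ≃ₗ[k] (Γ₂ × Γ₀))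
    (hφL : ∀ (a : A) (p : Γ₁ × Γ₀), φ (a • p) = a • φ p)
    (hφR : ∀ (a : A) (p : Γ₁ × Γ₀), φ (op a • p) = op a • φ p)
    (hφD : ∀ a : A, φ ((der₁.prod δ) a) = (der₂.prod δ) a)
    (hφ₀ : Submodule.map (φ : (Γ₁ × Γ₀) →ₗ[k] (Γ₂ × Γ₀))
        ((⊥ : Submodule k Γ₁).prod (⊤ : Submodule k Γ₀)) =
      (⊥ : Submodule k Γ₂).prod (⊤ : Submodule k Γ₀)) :
    ∃ ψ : Γ₁ ≃ₗ[k] Γ₂,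
      (∀ (a : A) (x : Γ₁), ψ (a • x) = a • ψ x) ∧
      (∀ (a : A) (x : Γ₁), ψ (op a • x) = op a • ψ x) ∧
      (∀ a : A, ψ (der₁ a) = der₂ a) := by
  
  classical
  set f : Γ₁ →ₗ[k] Γ₂ :=
    (LinearMap.fst k Γ₂ Γ₀) ∘ₗ (φ : (Γ₁ × Γ₀) →ₗ[k] (Γ₂ × Γ₀)) ∘ₗ
      LinearMap.inl k Γ₁ Γ₀ with hf
  have hf' : ∀ x : Γ₁, f x = (φ (x, 0)).1 := fun x => rfl
  have h0 : ∀ z : Γ₀, (φ (0, z)).1 = 0 := by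
    intro z
    have hmem : (0, z) ∈ (⊥ : Submodule k Γ₁).prod (⊤ : Submodule k Γ₀) :=
      ⟨rfl, trivial⟩
    have : φ (0, z) ∈ (⊥ : Submodule k Γ₂).prod (⊤ : Submodule k Γ₀) := by
      rw [← hφ₀]; exact ⟨(0, z), hmem, rfl⟩
    exact this.1
  have hinj : Function.Injective f := by
    rw [injective_iff_map_eq_zero]
    intro x hx
    have hmem : φ (x, 0) ∈ (⊥ : Submodule k Γ₂).prod (⊤ : Submodule k Γ₀) :=
      ⟨hx, trivial⟩
    rw [← hφ₀] at hmem
    obtain ⟨p, hp, hpe⟩ := hmem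
    have := φ.injective hpe
    have hx0 : x = 0 := by
      have := congrArg Prod.fst this
      simpa using this.symm.trans hp.1
    exact hx0
  have hsurj : Function.Surjective f := by
    intro y
    refine ⟨(φ.symm (y, 0)).1, ?_⟩
    have hdecomp : ((φ.symm (y, 0)).1, (0 : Γ₀)) =
        φ.symm (y, 0) - (0, (φ.symm (y, 0)).2) := by
      ext <;> simp
    rw [hf', hdecomp, map_sub]
    simp [h0]
  refine ⟨LinearEquiv.ofBijective f ⟨hinj, hsurj⟩, ?_, ?_, ?_⟩
  · intro a x
    show f (a • x) = a • f x
    rw [hf', hf']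
    have : ((a • x : Γ₁), (0 : Γ₀)) = a • (x, (0 : Γ₀)) := by
      simp [Prod.smul_def]
    rw [this, hφL]
    rfl
  · intro a x
    show f (op a • x) = op a • f x
    rw [hf', hf']
    have : ((op a • x : Γ₁), (0 : Γ₀)) = op a • (x, (0 : Γ₀)) := by
      simp [Prod.smul_def]
    rw [this, hφR]
    rfl
  · intro a
    show f (der₁ a) = der₂ a
    rw [hf']
    have hsplit : ((der₁ a : Γ₁), (0 : Γ₀)) = (der₁.prod δ) a - (0, δ a) := by
      ext <;> simp [LinearMap.prod_apply]
    rw [hsplit, map_sub, hφD]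
    have : ((der₂.prod δ) a).1 = der₂ a := rfl
    simp [h0, this]
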